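/- Let H be a separable Hilbert space, X a compact metrizable space, and f : X → H a weakly continuous function. Then the set of points of norm-continuity of f is a dense Gδ subset of X. -/

import Mathlib

open scoped InnerProductSpace
open Filter Topology


/-- Baire-category lemma: the continuity points of a pointwise limit of continuous
functions on a Baire space are dense. -/
theorem dense_continuousAt_of_pointwise_limit
    {X H : Type*} [TopologicalSpace X] [BaireSpace X] [MetricSpace H]
    (f : X → H) (g : ℕ → X → H) (hg : ∀ n, Continuous (g n))
    (hlim : ∀ x, Tendsto (fun n => g n x) atTop (𝓝 (f x))) :
    Dense {x : X | ContinuousAt f x} := by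
  set A : ℝ → ℕ → Set X := fun ε N =>
    {x | ∀ m ≥ N, ∀ k ≥ N, dist (g m x) (g k x) ≤ ε} with hA
  have hAclosed : ∀ ε N, IsClosed (A ε N) := by
    intro ε N
    have : A ε N = ⋂ (m : ℕ) (_ : m ≥ N) (k : ℕ) (_ : k ≥ N),
        {x | dist (g m x) (g k x) ≤ ε} := by
      ext x; simp [hA]
    rw [this]
    exact isClosed_iInter fun m => isClosed_iInter fun _ =>
      isClosed_iInter fun k => isClosed_iInter fun _ =>
        isClosed_le (Continuous.dist (hg m) (hg k)) continuous_const
  have hAunion : ∀ ε : ℝ, 0 < ε → (⋃ N, A ε N) = Set.univ := by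
    intro ε hε
    refine Set.eq_univ_of_forall fun x => ?_
    have hc : CauchySeq fun n => g n x := (hlim x).cauchySeq
    obtain ⟨N, hN⟩ := Metric.cauchySeq_iff'.1 hc (ε / 2) (by linarith)
    refine Set.mem_iUnion.2 ⟨N, fun m hm k hk => ?_⟩
    have h1 := hN m hm
    have h2 := hN k hk
    calc dist (g m x) (g k x) ≤ dist (g m x) (g N x) + dist (g N x) (g k x) :=
          dist_triangle _ _ _
      _ ≤ ε := by rw [dist_comm (g N x)]; linarith
  set D : ℕ → Set X := fun n => ⋃ N, interior (A (1 / (n + 1)) N) with hD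
  have hDopen : ∀ n, IsOpen (D n) := fun n => isOpen_iUnion fun N => isOpen_interior
  have hDdense : ∀ n, Dense (D n) := by
    intro n
    have hpos : (0:ℝ) < 1 / (n + 1) := by positivity
    exact dense_iUnion_interior_of_closed (hAclosed _) (hAunion _ hpos)
  have hS : Dense (⋂ n, D n) := dense_iInter_of_isOpen_nat hDopen hDdense
  refine hS.mono fun x hx => ?_
  have hx' : ∀ n, x ∈ D n := Set.mem_iInter.1 hx
  rw [Set.mem_setOf_eq, ContinuousAt, Metric.tendsto_nhds]
  intro ε hε
  obtain ⟨n, hn⟩ := exists_nat_one_div_lt (show (0:ℝ) < ε / 4 by linarith)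
  set δ : ℝ := 1 / (n + 1) with hδ
  have hδpos : 0 < δ := by positivity
  obtain ⟨N, hN⟩ := Set.mem_iUnion.1 (hx' n)
  -- on `A δ N`, `f` is within `δ` of the continuous function `g N`
  have key : ∀ y ∈ A δ N, dist (f y) (g N y) ≤ δ := by
    intro y hy
    have ht : Tendsto (fun m => dist (g m y) (g N y)) atTop (𝓝 (dist (f y) (g N y))) :=
      (hlim y).dist tendsto_const_nhds
    refine le_of_tendsto ht (eventually_atTop.2 ⟨N, fun m hm => ?_⟩)
    exact hy m hm N le_rfl
  have hxA : x ∈ A δ N := interior_subset hN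
  have hev1 : ∀ᶠ y in 𝓝 x, y ∈ A δ N :=
    mem_of_superset (isOpen_interior.mem_nhds hN) interior_subset
  have hev2 : ∀ᶠ y in 𝓝 x, dist (g N y) (g N x) < δ :=
    Metric.tendsto_nhds.1 ((hg N).continuousAt) δ hδpos
  filter_upwards [hev1, hev2] with y hy1 hy2
  have k1 := key y hy1
  have k2 := key x hxA
  have : dist (f y) (f x) ≤ dist (f y) (g N y) + dist (g N y) (g N x) + dist (g N x) (f x) :=
    dist_triangle4 _ _ _ _
  rw [dist_comm (g N x)] at this
  have : dist (f y) (f x) < 3 * δ := by linarith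
  have h4 : δ < ε / 4 := hn
  linarith


/-- The set of points of norm-continuity of a weakly continuous function from a compact
metrizable space to a separable Hilbert space is a dense Gδ. -/
theorem continuity_points_of_weakly_continuous_dense_Gdelta
    {X H : Type*} [MetricSpace X] [CompactSpace X]
    [NormedAddCommGroup H] [InnerProductSpace ℝ H] [CompleteSpace H]
    [TopologicalSpace.SeparableSpace H]
    (f : X → H) (hweak : ∀ v : H, Continuous fun x => ⟪v, f x⟫_ℝ) :
    Dense {x : X | ContinuousAt f x} ∧ IsGδ {x : X | ContinuousAt f x} := by
  refine ⟨?_, IsGδ.setOf_continuousAt f⟩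
  have : Nonempty H := ⟨0⟩
  obtain ⟨u, hu⟩ := TopologicalSpace.exists_dense_seq H
  set V : ℕ → Submodule ℝ H := fun n => Submodule.span ℝ (u '' Set.Iic n) with hV
  haveI hfd : ∀ n, FiniteDimensional ℝ (V n) := fun n =>
    FiniteDimensional.span_of_finite ℝ ((Set.finite_Iic n).image u)
  set b : ∀ n, OrthonormalBasis (Fin (Module.finrank ℝ (V n))) ℝ (V n) :=
    fun n => stdOrthonormalBasis ℝ (V n) with hb
  set g : ℕ → X → H := fun n x => ∑ i, ⟪((b n i : H)), f x⟫_ℝ • (b n i : H) with hg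
  have hgproj : ∀ n x, g n x = ((V n).orthogonalProjectionOnto (f x) : H) := by
    intro n x
    rw [hg]
    simp only []
    rw [(b n).orthogonalProjectionOnto_apply_eq_sum (f x)]
    push_cast
    simp
  have hgcont : ∀ n, Continuous (g n) := by
    intro n
    exact continuous_finset_sum _ fun i _ => (hweak _).smul continuous_const
  have hglim : ∀ x, Tendsto (fun n => g n x) atTop (𝓝 (f x)) := by
    intro x
    set y := f x
    simp only [hgproj]
    rw [Metric.tendsto_atTop]
    intro ε hε
    obtain ⟨m, hm⟩ := Metric.denseRange_iff.1 hu y ε hε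
    refine ⟨m, fun n hn => ?_⟩
    have humem : u m ∈ V n := Submodule.subset_span ⟨m, Set.mem_Iic.2 hn, rfl⟩
    have hle : ‖y - ((V n).orthogonalProjectionOnto y : H)‖ ≤ ‖y - u m‖ := by
      rw [← Submodule.starProjection_apply, Submodule.starProjection_minimal]
      exact ciInf_le ⟨0, by rintro z ⟨w, rfl⟩; positivity⟩ (⟨u m, humem⟩ : V n)
    rw [dist_comm, dist_eq_norm]
    calc ‖y - ((V n).orthogonalProjectionOnto y : H)‖ ≤ ‖y - u m‖ := hle
      _ = dist y (u m) := (dist_eq_norm _ _).symm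
      _ < ε := hm
  exact dense_continuousAt_of_pointwise_limit f g hgcont hglim
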